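/- Let F(x,λ) = λ⁴ − (1+11x+84x²)·λ³ − 12x²(7+30x−28x²)·λ² + 288x⁴(1+4x+32x²)·λ − 27648x⁸. Then F(1,96) = 0, and if δ > 0 and λ : (1−δ, 1+δ) → ℝ is twice differentiable with λ(1) = 96 and F(x, λ(x)) = 0 for all x ∈ (1−δ, 1+δ), then e := λ′(1)/96 = 5488/3037 and v := (−λ′(1)² + 96·λ″(1) + 96·λ′(1))/96² = 4819233780/28011371653 > 0. -/

import Mathlib

open Set

lemma aux_mono (c : ℝ) (n : ℕ) (x : ℝ) :
    HasDerivAt (fun y : ℝ => c * y ^ n) (c * (n * x ^ (n-1))) x :=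
  (hasDerivAt_pow n x).const_mul c

lemma aux_p (x : ℝ) : HasDerivAt (fun y : ℝ => 1 + 11*y + 84*y^2) (11 + 168*x) x := by
  have h := ((hasDerivAt_const x (1:ℝ)).add ((hasDerivAt_id' x).const_mul 11)).add (aux_mono 84 2 x)
  refine h.congr_deriv ?_
  push_cast; ring

lemma aux_pA (x : ℝ) : HasDerivAt (fun y : ℝ => 11 + 168*y) (168 : ℝ) x := by
  have h := (hasDerivAt_const x (11:ℝ)).add ((hasDerivAt_id' x).const_mul 168)
  refine h.congr_deriv ?_
  ring

lemma aux_q (x : ℝ) : HasDerivAt (fun y : ℝ => 84*y^2 + 360*y^3 - 336*y^4)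
    (168*x + 1080*x^2 - 1344*x^3) x := by
  have h := ((aux_mono 84 2 x).add (aux_mono 360 3 x)).sub (aux_mono 336 4 x)
  refine h.congr_deriv ?_
  push_cast; ring

lemma aux_q1 (x : ℝ) : HasDerivAt (fun y : ℝ => 168*y + 1080*y^2 - 1344*y^3)
    (168 + 2160*x - 4032*x^2) x := by
  have h := (((hasDerivAt_id' x).const_mul 168).add (aux_mono 1080 2 x)).sub (aux_mono 1344 3 x)
  refine h.congr_deriv ?_
  push_cast; ring

lemma aux_r (x : ℝ) : HasDerivAt (fun y : ℝ => 288*y^4 + 1152*y^5 + 9216*y^6)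
    (1152*x^3 + 5760*x^4 + 55296*x^5) x := by
  have h := ((aux_mono 288 4 x).add (aux_mono 1152 5 x)).add (aux_mono 9216 6 x)
  refine h.congr_deriv ?_
  push_cast; ring

lemma aux_r1 (x : ℝ) : HasDerivAt (fun y : ℝ => 1152*y^3 + 5760*y^4 + 55296*y^5)
    (3456*x^2 + 23040*x^3 + 276480*x^4) x := by
  have h := ((aux_mono 1152 3 x).add (aux_mono 5760 4 x)).add (aux_mono 55296 5 x)
  refine h.congr_deriv ?_
  push_cast; ring

lemma aux_s (x : ℝ) : HasDerivAt (fun y : ℝ => 27648*y^8) (221184*x^7) x := by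
  have h := aux_mono 27648 8 x
  refine h.congr_deriv ?_
  push_cast; ring

lemma aux_s1 (x : ℝ) : HasDerivAt (fun y : ℝ => 221184*y^7) (1548288*x^6) x := by
  have h := aux_mono 221184 7 x
  refine h.congr_deriv ?_
  push_cast; ring

theorem grid_euler_genus_parameters
    (F : ℝ → ℝ → ℝ)
    (hF : ∀ x l : ℝ, F x l = l ^ 4 - (1 + 11 * x + 84 * x ^ 2) * l ^ 3 -
      12 * x ^ 2 * (7 + 30 * x - 28 * x ^ 2) * l ^ 2 +
      288 * x ^ 4 * (1 + 4 * x + 32 * x ^ 2) * l - 27648 * x ^ 8) :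
    F 1 96 = 0 ∧
    ∀ (δ : ℝ), 0 < δ → ∀ lam : ℝ → ℝ,
      (∀ x ∈ Set.Ioo (1 - δ) (1 + δ), DifferentiableAt ℝ lam x) →
      (∀ x ∈ Set.Ioo (1 - δ) (1 + δ), DifferentiableAt ℝ (deriv lam) x) →
      lam 1 = 96 →
      (∀ x ∈ Set.Ioo (1 - δ) (1 + δ), F x (lam x) = 0) →
      deriv lam 1 / 96 = 5488 / 3037 ∧
      (-(deriv lam 1) ^ 2 + 96 * deriv (deriv lam) 1 + 96 * deriv lam 1) / 96 ^ 2 =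
        4819233780 / 28011371653 ∧
      0 < (4819233780 : ℝ) / 28011371653 := by
  constructor
  · rw [hF]; norm_num
  intro δ hδ lam h1 h2 hl96 heq
  have hmem : (1:ℝ) ∈ Set.Ioo (1-δ) (1+δ) := ⟨by linarith, by linarith⟩
  -- g vanishes on the interval
  have hg0 : ∀ x ∈ Set.Ioo (1-δ) (1+δ),
      (lam x)^4 - (1+11*x+84*x^2)*(lam x)^3 - (84*x^2+360*x^3-336*x^4)*(lam x)^2
        + (288*x^4+1152*x^5+9216*x^6)*(lam x) - 27648*x^8 = 0 := by
    intro x hx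
    have h := heq x hx
    rw [hF] at h
    linear_combination h
  -- g has derivative g1 on the interval
  have hgd : ∀ x ∈ Set.Ioo (1-δ) (1+δ),
      HasDerivAt (fun y => (lam y)^4 - (1+11*y+84*y^2)*(lam y)^3
          - (84*y^2+360*y^3-336*y^4)*(lam y)^2
          + (288*y^4+1152*y^5+9216*y^6)*(lam y) - 27648*y^8)
        (4*(lam x)^3*(deriv lam x)
          - ((11+168*x)*(lam x)^3 + (1+11*x+84*x^2)*(3*(lam x)^2*(deriv lam x)))
          - ((168*x+1080*x^2-1344*x^3)*(lam x)^2
              + (84*x^2+360*x^3-336*x^4)*(2*(lam x)*(deriv lam x)))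
          + ((1152*x^3+5760*x^4+55296*x^5)*(lam x)
              + (288*x^4+1152*x^5+9216*x^6)*(deriv lam x))
          - 221184*x^7) x := by
    intro x hx
    have hl : HasDerivAt lam (deriv lam x) x := (h1 x hx).hasDerivAt
    have H := ((((hl.pow 4).sub ((aux_p x).mul (hl.pow 3))).sub
        ((aux_q x).mul (hl.pow 2))).add ((aux_r x).mul hl)).sub (aux_s x)
    refine H.congr_deriv ?_
    simp only [Pi.pow_apply, Pi.mul_apply]; push_cast; ring
  -- hence g1 vanishes on the interval
  have hg10 : ∀ x ∈ Set.Ioo (1-δ) (1+δ),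
      4*(lam x)^3*(deriv lam x)
        - ((11+168*x)*(lam x)^3 + (1+11*x+84*x^2)*(3*(lam x)^2*(deriv lam x)))
        - ((168*x+1080*x^2-1344*x^3)*(lam x)^2
            + (84*x^2+360*x^3-336*x^4)*(2*(lam x)*(deriv lam x)))
        + ((1152*x^3+5760*x^4+55296*x^5)*(lam x)
            + (288*x^4+1152*x^5+9216*x^6)*(deriv lam x))
        - 221184*x^7 = 0 := by
    intro x hx
    have hA : (fun y => (lam y)^4 - (1+11*y+84*y^2)*(lam y)^3
        - (84*y^2+360*y^3-336*y^4)*(lam y)^2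
        + (288*y^4+1152*y^5+9216*y^6)*(lam y) - 27648*y^8) =ᶠ[nhds x]
        (fun _ => (0:ℝ)) :=
      Filter.eventuallyEq_of_mem (isOpen_Ioo.mem_nhds hx) hg0
    have hB := hA.deriv_eq
    rw [deriv_const] at hB
    rw [← (hgd x hx).deriv]
    exact hB
  -- g1 has a derivative at 1
  have hl1 : HasDerivAt lam (deriv lam 1) 1 := (h1 1 hmem).hasDerivAt
  have hl2 : HasDerivAt (deriv lam) (deriv (deriv lam) 1) 1 := (h2 1 hmem).hasDerivAt
  have hgd2 : HasDerivAt (fun x =>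
      4*(lam x)^3*(deriv lam x)
        - ((11+168*x)*(lam x)^3 + (1+11*x+84*x^2)*(3*(lam x)^2*(deriv lam x)))
        - ((168*x+1080*x^2-1344*x^3)*(lam x)^2
            + (84*x^2+360*x^3-336*x^4)*(2*(lam x)*(deriv lam x)))
        + ((1152*x^3+5760*x^4+55296*x^5)*(lam x)
            + (288*x^4+1152*x^5+9216*x^6)*(deriv lam x))
        - 221184*x^7)
      (((4*(3*(lam 1)^2*(deriv lam 1)))*(deriv lam 1) + (4*(lam 1)^3)*(deriv (deriv lam) 1))
        - ((168*(lam 1)^3 + (11+168*1)*(3*(lam 1)^2*(deriv lam 1)))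
            + ((11+168*1)*(3*(lam 1)^2*(deriv lam 1))
              + (1+11*1+84*1^2)*((3*(2*(lam 1)*(deriv lam 1)))*(deriv lam 1)
                + (3*(lam 1)^2)*(deriv (deriv lam) 1))))
        - (((168+2160*1-4032*1^2)*(lam 1)^2
              + (168*1+1080*1^2-1344*1^3)*(2*(lam 1)*(deriv lam 1)))
            + ((168*1+1080*1^2-1344*1^3)*(2*(lam 1)*(deriv lam 1))
              + (84*1^2+360*1^3-336*1^4)*((2*(deriv lam 1))*(deriv lam 1)
                + (2*(lam 1))*(deriv (deriv lam) 1))))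
        + (((3456*1^2+23040*1^3+276480*1^4)*(lam 1)
              + (1152*1^3+5760*1^4+55296*1^5)*(deriv lam 1))
            + ((1152*1^3+5760*1^4+55296*1^5)*(deriv lam 1)
              + (288*1^4+1152*1^5+9216*1^6)*(deriv (deriv lam) 1)))
        - 1548288*1^6) 1 := by
    have T1 : HasDerivAt (fun x => 4*(lam x)^3*(deriv lam x))
        ((4*(3*(lam 1)^2*(deriv lam 1)))*(deriv lam 1)
          + (4*(lam 1)^3)*(deriv (deriv lam) 1)) 1 := by
      have := ((hl1.pow 3).const_mul 4).mul hl2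
      refine this.congr_deriv ?_
      all_goals (simp only [Pi.pow_apply, Pi.mul_apply]; push_cast; ring)
    have T2 : HasDerivAt (fun x => (11+168*x)*(lam x)^3 + (1+11*x+84*x^2)*(3*(lam x)^2*(deriv lam x)))
        ((168*(lam 1)^3 + (11+168*1)*(3*(lam 1)^2*(deriv lam 1)))
          + ((11+168*1)*(3*(lam 1)^2*(deriv lam 1))
            + (1+11*1+84*1^2)*((3*(2*(lam 1)*(deriv lam 1)))*(deriv lam 1)
              + (3*(lam 1)^2)*(deriv (deriv lam) 1)))) 1 := by
      have := ((aux_pA 1).mul (hl1.pow 3)).add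
        ((aux_p 1).mul ((((hl1.pow 2).const_mul 3)).mul hl2))
      refine this.congr_deriv ?_
      all_goals (simp only [Pi.pow_apply, Pi.mul_apply]; push_cast; ring)
    have T3 : HasDerivAt (fun x => (168*x+1080*x^2-1344*x^3)*(lam x)^2
          + (84*x^2+360*x^3-336*x^4)*(2*(lam x)*(deriv lam x)))
        (((168+2160*1-4032*1^2)*(lam 1)^2
            + (168*1+1080*1^2-1344*1^3)*(2*(lam 1)*(deriv lam 1)))
          + ((168*1+1080*1^2-1344*1^3)*(2*(lam 1)*(deriv lam 1))
            + (84*1^2+360*1^3-336*1^4)*((2*(deriv lam 1))*(deriv lam 1)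
              + (2*(lam 1))*(deriv (deriv lam) 1)))) 1 := by
      have := ((aux_q1 1).mul (hl1.pow 2)).add
        ((aux_q 1).mul ((hl1.const_mul 2).mul hl2))
      refine this.congr_deriv ?_
      all_goals (simp only [Pi.pow_apply, Pi.mul_apply]; push_cast; ring)
    have T4 : HasDerivAt (fun x => (1152*x^3+5760*x^4+55296*x^5)*(lam x)
          + (288*x^4+1152*x^5+9216*x^6)*(deriv lam x))
        (((3456*1^2+23040*1^3+276480*1^4)*(lam 1)
            + (1152*1^3+5760*1^4+55296*1^5)*(deriv lam 1))
          + ((1152*1^3+5760*1^4+55296*1^5)*(deriv lam 1)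
            + (288*1^4+1152*1^5+9216*1^6)*(deriv (deriv lam) 1))) 1 := by
      have := ((aux_r1 1).mul hl1).add ((aux_r 1).mul hl2)
      refine this.congr_deriv ?_
      all_goals (push_cast; ring)
    have T5 : HasDerivAt (fun x : ℝ => 221184*x^7) (1548288*(1:ℝ)^6) 1 := aux_s1 1
    exact (((T1.sub T2).sub T3).add T4).sub T5
  -- deriv of g1 at 1 is 0
  have hev : (fun x =>
      4*(lam x)^3*(deriv lam x)
        - ((11+168*x)*(lam x)^3 + (1+11*x+84*x^2)*(3*(lam x)^2*(deriv lam x)))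
        - ((168*x+1080*x^2-1344*x^3)*(lam x)^2
            + (84*x^2+360*x^3-336*x^4)*(2*(lam x)*(deriv lam x)))
        + ((1152*x^3+5760*x^4+55296*x^5)*(lam x)
            + (288*x^4+1152*x^5+9216*x^6)*(deriv lam x))
        - 221184*x^7) =ᶠ[nhds 1] (fun _ => (0:ℝ)) :=
    Filter.eventuallyEq_of_mem (isOpen_Ioo.mem_nhds hmem) hg10
  have heq2 : (((4*(3*(lam 1)^2*(deriv lam 1)))*(deriv lam 1) + (4*(lam 1)^3)*(deriv (deriv lam) 1))
        - ((168*(lam 1)^3 + (11+168*1)*(3*(lam 1)^2*(deriv lam 1)))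
            + ((11+168*1)*(3*(lam 1)^2*(deriv lam 1))
              + (1+11*1+84*1^2)*((3*(2*(lam 1)*(deriv lam 1)))*(deriv lam 1)
                + (3*(lam 1)^2)*(deriv (deriv lam) 1))))
        - (((168+2160*1-4032*1^2)*(lam 1)^2
              + (168*1+1080*1^2-1344*1^3)*(2*(lam 1)*(deriv lam 1)))
            + ((168*1+1080*1^2-1344*1^3)*(2*(lam 1)*(deriv lam 1))
              + (84*1^2+360*1^3-336*1^4)*((2*(deriv lam 1))*(deriv lam 1)
                + (2*(lam 1))*(deriv (deriv lam) 1))))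
        + (((3456*1^2+23040*1^3+276480*1^4)*(lam 1)
              + (1152*1^3+5760*1^4+55296*1^5)*(deriv lam 1))
            + ((1152*1^3+5760*1^4+55296*1^5)*(deriv lam 1)
              + (288*1^4+1152*1^5+9216*1^6)*(deriv (deriv lam) 1)))
        - 1548288*1^6) = 0 := by
    have hB := hev.deriv_eq
    rw [deriv_const] at hB
    rw [← hgd2.deriv]
    exact hB
  -- now extract the two linear equations
  have heq1 := hg10 1 hmem
  rw [hl96] at heq1 heq2
  norm_num at heq1 heq2
  -- heq1 is linear in deriv lam 1; heq2 linear in second deriv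
  have ha : deriv lam 1 = 526848/3037 := by linarith
  rw [ha] at heq2
  have hb : deriv (deriv lam) 1 = 4384338051456/28011371653 := by linarith
  refine ⟨by rw [ha]; norm_num, by rw [ha, hb]; norm_num, by norm_num⟩
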